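/- Let X, Y, Z be complete path metric spaces, and let H denote the set of nonexpansive maps X → Y equipped with the metric (d_sup)_ℓ, the intrinsic metric associated to the supremum metric d_sup. Then a function f : Z × X → Y is nonexpansive for the ℓ¹ distance d((z,x),(z',x')) = d_Z(z,z') + d_X(x,x') if and only if for each z ∈ Z the map f(z,·) : X → Y is nonexpansive and the curried map z ↦ f(z,·) is a nonexpansive map from Z to (H, (d_sup)_ℓ). -/

import Mathlib

open ENNReal NNReal

/-- The space of nonexpansive (`1`-Lipschitz) maps `Y → X` between extended metric spaces. -/
def NonexpMap (Y X : Type*) [EMetricSpace Y] [EMetricSpace X] : Type _ :=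
  {f : Y → X // LipschitzWith 1 f}

/-- The supremum extended metric on the space of nonexpansive maps. -/
noncomputable instance NonexpMap.instEMetricSpace (Y X : Type*) [EMetricSpace Y]
    [EMetricSpace X] : EMetricSpace (NonexpMap Y X) where
  edist f g := ⨆ y : Y, edist (f.1 y) (g.1 y)
  edist_self f := by simp
  edist_comm f g := by simp [edist_comm]
  edist_triangle f g h :=
    iSup_le fun y =>
      le_trans (edist_triangle (f.1 y) (g.1 y) (h.1 y))
        (add_le_add (le_iSup (fun y => edist (f.1 y) (g.1 y)) y)
          (le_iSup (fun y => edist (g.1 y) (h.1 y)) y))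
  eq_of_edist_eq_zero := by
    intro f g h
    refine Subtype.ext (funext fun y => ?_)
    exact eq_of_edist_eq_zero
      (le_antisymm (le_trans (le_iSup (fun y => edist (f.1 y) (g.1 y)) y) h.le) zero_le)

/-- Constructor for `NonexpMap`. -/
def NonexpMap.mk {Y X : Type*} [EMetricSpace Y] [EMetricSpace X] (f : Y → X)
    (hf : LipschitzWith 1 f) : NonexpMap Y X :=
  ⟨f, hf⟩

/-- The intrinsic (length) extended distance associated to an extended metric:
the infimum of lengths `ℓ` of `1`-Lipschitz curves `[0, ℓ] → X` joining the two points. -/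
noncomputable def intrinsicEDist {X : Type*} [EMetricSpace X] (x x' : X) : ℝ≥0∞ :=
  sInf {L : ℝ≥0∞ | ∃ ℓ : ℝ≥0, L = (ℓ : ℝ≥0∞) ∧ ∃ φ : ℝ → X,
    LipschitzOnWith 1 φ (Set.Icc 0 (ℓ : ℝ)) ∧ φ 0 = x ∧ φ (ℓ : ℝ) = x'}

lemma NonexpMap.edist_def {Y X : Type*} [EMetricSpace Y] [EMetricSpace X]
    (f g : NonexpMap Y X) : edist f g = ⨆ y : Y, edist (f.1 y) (g.1 y) := rfl

lemma edist_le_intrinsicEDist {X : Type*} [EMetricSpace X] (x x' : X) :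
    edist x x' ≤ intrinsicEDist x x' := by
  refine le_sInf ?_
  rintro L ⟨ℓ, rfl, φ, hφ, h0, h1⟩
  have h := hφ (Set.left_mem_Icc.2 ℓ.2) (Set.right_mem_Icc.2 ℓ.2)
  rw [h0, h1] at h
  calc edist x x' ≤ 1 * edist (0 : ℝ) (ℓ : ℝ) := h
    _ = (ℓ : ℝ≥0∞) := by
        rw [one_mul, edist_dist, Real.dist_eq]
        simp [abs_of_nonneg ℓ.2]

/-- Currying adjunction for the `ℓ¹` tensor product of complete path metric spaces:
`f : Z × X → Y` is nonexpansive for the `ℓ¹` distance on `Z × X` if and only if each slice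
`f(z, ·)` is nonexpansive and `z ↦ f(z, ·)` is nonexpansive from `Z` into the space `H` of
nonexpansive maps `X → Y` endowed with the intrinsic metric `(d_sup)_ℓ` associated to the
supremum metric. -/
theorem l1_curry_adjunction {X Y Z : Type*}
    [EMetricSpace X] [CompleteSpace X] [EMetricSpace Y] [CompleteSpace Y]
    [EMetricSpace Z] [CompleteSpace Z]
    (hX : ∀ x x' : X, edist x x' = intrinsicEDist x x')
    (hY : ∀ y y' : Y, edist y y' = intrinsicEDist y y')
    (hZ : ∀ z z' : Z, edist z z' = intrinsicEDist z z')
    (f : Z × X → Y) :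
    (∀ p q : Z × X, edist (f p) (f q) ≤ edist p.1 q.1 + edist p.2 q.2) ↔
      ∃ h : ∀ z : Z, LipschitzWith 1 (fun x => f (z, x)),
        ∀ z z' : Z,
          intrinsicEDist (NonexpMap.mk (fun x => f (z, x)) (h z))
              (NonexpMap.mk (fun x => f (z', x)) (h z')) ≤ edist z z' := by
  constructor
  · intro hf
    have hslice : ∀ z : Z, LipschitzWith 1 (fun x => f (z, x)) := by
      intro z x x'
      calc edist (f (z, x)) (f (z, x')) ≤ edist z z + edist x x' := hf (z, x) (z, x')
        _ = 1 * edist x x' := by simp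
    refine ⟨hslice, fun z z' => ?_⟩
    rw [hZ z z']
    refine le_sInf ?_
    rintro L ⟨ℓ, rfl, φ, hφ, h0, h1⟩
    refine sInf_le ⟨ℓ, rfl, fun t => NonexpMap.mk (fun x => f (φ t, x)) (hslice (φ t)),
      ?_, ?_, ?_⟩
    · intro s hs t ht
      rw [NonexpMap.edist_def]
      refine iSup_le fun x => ?_
      calc edist (f (φ s, x)) (f (φ t, x))
          ≤ edist (φ s) (φ t) + edist x x := hf (φ s, x) (φ t, x)
        _ = edist (φ s) (φ t) := by simp
        _ ≤ 1 * edist s t := hφ hs ht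
    · exact Subtype.ext (funext fun x => by simp [NonexpMap.mk, h0])
    · exact Subtype.ext (funext fun x => by simp [NonexpMap.mk, h1])
  · rintro ⟨h, hcurry⟩ ⟨z, x⟩ ⟨z', x'⟩
    have h1 : edist (f (z, x)) (f (z', x)) ≤ edist z z' := by
      calc edist (f (z, x)) (f (z', x))
          ≤ ⨆ y : X, edist (f (z, y)) (f (z', y)) :=
            le_iSup (fun y : X => edist (f (z, y)) (f (z', y))) x
        _ = edist (NonexpMap.mk (fun x => f (z, x)) (h z))
              (NonexpMap.mk (fun x => f (z', x)) (h z')) := rfl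
        _ ≤ intrinsicEDist (NonexpMap.mk (fun x => f (z, x)) (h z))
              (NonexpMap.mk (fun x => f (z', x)) (h z')) := edist_le_intrinsicEDist _ _
        _ ≤ edist z z' := hcurry z z'
    calc edist (f (z, x)) (f (z', x'))
        ≤ edist (f (z, x)) (f (z', x)) + edist (f (z', x)) (f (z', x')) := edist_triangle _ _ _
      _ ≤ edist z z' + edist x x' := by
          refine add_le_add h1 ?_
          simpa using h z' x x'
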